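/- For every subset S of {1,...,n} of size k (1 ≤ k ≤ n), one has tr((A_S A_Sᵀ + λ I_d)⁻¹) = tr((C_{S,S})⁻¹) + (d−k)/λ, where A_S is the d×k submatrix of A formed by the columns indexed by S and C_{S,S} is the k×k principal submatrix of C indexed by S. Consequently z_k = min_{|S|=k} tr((C_{S,S})⁻¹) + (d−k)/λ. -/

import Mathlib

open Matrix Finset

noncomputable section


/-- The information matrix `∑_{i ∈ S} a_i a_iᵀ + λ I_d`. -/
def infoM (d n : ℕ) (a : Fin n → Fin d → ℝ) (lam : ℝ) (S : Finset (Fin n)) :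
    Matrix (Fin d) (Fin d) ℝ :=
  (∑ i ∈ S, Matrix.vecMulVec (a i) (a i)) + lam • (1 : Matrix (Fin d) (Fin d) ℝ)

/-- `f(S) = tr((∑_{i∈S} a_i a_iᵀ + λ I_d)⁻¹)`. -/
def fS (d n : ℕ) (a : Fin n → Fin d → ℝ) (lam : ℝ) (S : Finset (Fin n)) : ℝ :=
  Matrix.trace (infoM d n a lam S)⁻¹

/-- `z_k = min_{|S| = k} f(S)`. -/
def zk (d n : ℕ) (a : Fin n → Fin d → ℝ) (lam : ℝ) (k : ℕ) : ℝ :=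
  sInf {r : ℝ | ∃ S : Finset (Fin n), S.card = k ∧ fS d n a lam S = r}

/-- The `d × n` matrix whose `i`-th column is `a_i`. -/
def Amat (d n : ℕ) (a : Fin n → Fin d → ℝ) : Matrix (Fin d) (Fin n) ℝ :=
  Matrix.of fun i j => a j i

/-- `C = AᵀA + λ I_n`. -/
def Cmat (d n : ℕ) (a : Fin n → Fin d → ℝ) (lam : ℝ) : Matrix (Fin n) (Fin n) ℝ :=
  (Amat d n a)ᵀ * Amat d n a + lam • (1 : Matrix (Fin n) (Fin n) ℝ)

/-- The principal submatrix `C_{S,S}`. -/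
def Csub (d n : ℕ) (a : Fin n → Fin d → ℝ) (lam : ℝ) (S : Finset (Fin n)) :
    Matrix {x : Fin n // x ∈ S} {x : Fin n // x ∈ S} ℝ :=
  (Cmat d n a lam).submatrix (fun i => i.1) (fun i => i.1)

end



lemma posDef_add_smul_one {m : Type*} [Fintype m] [DecidableEq m]
    {Q : Matrix m m ℝ} (hQ : Q.PosSemidef) {lam : ℝ} (hlam : 0 < lam) :
    (Q + lam • (1 : Matrix m m ℝ)).PosDef := by
  rw [Matrix.posDef_iff_dotProduct_mulVec]
  constructor
  · have h1 : (lam • (1 : Matrix m m ℝ)).IsHermitian := by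
      simp [Matrix.IsHermitian]
    exact hQ.1.add h1
  · intro x hx
    have h1 : 0 ≤ dotProduct (star x) (Q *ᵥ x) := hQ.dotProduct_mulVec_nonneg x
    have h2 : 0 < dotProduct (star x) x := dotProduct_star_self_pos_iff.mpr hx
    have : (Q + lam • (1 : Matrix m m ℝ)) *ᵥ x = Q *ᵥ x + lam • x := by
      simp [Matrix.add_mulVec, Matrix.smul_mulVec]
    rw [this, dotProduct_add, dotProduct_smul]
    have : 0 < lam * dotProduct (star x) x := mul_pos hlam h2
    simp only [smul_eq_mul]
    linarith [this]

/-- The main trace identity. -/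
lemma trace_identity {m : Type*} [Fintype m] [DecidableEq m] {d : ℕ}
    (B : Matrix (Fin d) m ℝ) {lam : ℝ} (hlam : 0 < lam) :
    Matrix.trace (B * Bᵀ + lam • (1 : Matrix (Fin d) (Fin d) ℝ))⁻¹
      = Matrix.trace (Bᵀ * B + lam • (1 : Matrix m m ℝ))⁻¹
        + ((d : ℝ) - Fintype.card m) / lam := by
  set M := B * Bᵀ + lam • (1 : Matrix (Fin d) (Fin d) ℝ) with hMdef
  set N := Bᵀ * B + lam • (1 : Matrix m m ℝ) with hNdef
  have hBBt : (B * Bᵀ).PosSemidef := by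
    simpa using Matrix.posSemidef_self_mul_conjTranspose B
  have hBtB : (Bᵀ * B).PosSemidef := by
    simpa using Matrix.posSemidef_conjTranspose_mul_self B
  have hM : IsUnit M.det :=
    ((posDef_add_smul_one hBBt hlam).det_pos).ne'.isUnit
  have hN : IsUnit N.det :=
    ((posDef_add_smul_one hBtB hlam).det_pos).ne'.isUnit
  have key : M * B = B * N := by
    simp [hMdef, hNdef, Matrix.add_mul, Matrix.mul_add, Matrix.mul_assoc,
      Matrix.smul_mul, Matrix.mul_smul]
  have key2 : B * N⁻¹ = M⁻¹ * B :=
    calc B * N⁻¹ = (M⁻¹ * M) * (B * N⁻¹) := by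
          rw [Matrix.nonsing_inv_mul M hM, Matrix.one_mul]
      _ = M⁻¹ * ((M * B) * N⁻¹) := by rw [Matrix.mul_assoc, Matrix.mul_assoc]
      _ = M⁻¹ * ((B * N) * N⁻¹) := by rw [key]
      _ = M⁻¹ * B := by
          rw [Matrix.mul_assoc, Matrix.mul_nonsing_inv N hN, Matrix.mul_one]
  have key3 : lam • M⁻¹ = 1 - B * N⁻¹ * Bᵀ := by
    have h1 : M⁻¹ * M = 1 := Matrix.nonsing_inv_mul M hM
    have h2 : M⁻¹ * (B * Bᵀ) + lam • M⁻¹ = 1 := by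
      rw [← h1, hMdef]; rw [Matrix.mul_add, Matrix.mul_smul, Matrix.mul_one]
    have h3 : M⁻¹ * (B * Bᵀ) = B * N⁻¹ * Bᵀ := by
      rw [← Matrix.mul_assoc, ← key2]
    rw [h3] at h2
    linear_combination (norm := abel) h2
  have key4 : lam • N⁻¹ = 1 - N⁻¹ * (Bᵀ * B) := by
    have h1 : N⁻¹ * N = 1 := Matrix.nonsing_inv_mul N hN
    have h2 : N⁻¹ * (Bᵀ * B) + lam • N⁻¹ = 1 := by
      rw [← h1, hNdef]; rw [Matrix.mul_add, Matrix.mul_smul, Matrix.mul_one]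
    linear_combination (norm := abel) h2
  have t1 : lam * Matrix.trace M⁻¹
      = (d : ℝ) - Matrix.trace (N⁻¹ * (Bᵀ * B)) := by
    have := congrArg Matrix.trace key3
    rw [Matrix.trace_smul, Matrix.trace_sub, Matrix.trace_one] at this
    rw [Matrix.mul_assoc, Matrix.trace_mul_comm B (N⁻¹ * Bᵀ), Matrix.mul_assoc] at this
    simpa using this
  have t2 : lam * Matrix.trace N⁻¹
      = (Fintype.card m : ℝ) - Matrix.trace (N⁻¹ * (Bᵀ * B)) := by
    have := congrArg Matrix.trace key4
    rw [Matrix.trace_smul, Matrix.trace_sub, Matrix.trace_one] at this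
    simpa using this
  have hlam' : lam ≠ 0 := hlam.ne'
  apply mul_left_cancel₀ hlam'
  rw [mul_add, mul_div_cancel₀ _ hlam']
  linarith [t1, t2]

lemma fS_eq (d n : ℕ) (a : Fin n → Fin d → ℝ) {lam : ℝ} (hlam : 0 < lam)
    (S : Finset (Fin n)) :
    fS d n a lam S = Matrix.trace (Csub d n a lam S)⁻¹ + ((d : ℝ) - S.card) / lam := by
  classical
  set B : Matrix (Fin d) {x : Fin n // x ∈ S} ℝ := Matrix.of fun i j => a j.1 i with hB
  have hInfo : infoM d n a lam S = B * Bᵀ + lam • 1 := by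
    unfold infoM
    congr 1
    ext p q
    rw [Matrix.sum_apply]
    simp only [Matrix.vecMulVec_apply, Matrix.mul_apply, Matrix.transpose_apply, hB,
      Matrix.of_apply]
    rw [← Finset.sum_coe_sort S (fun i => a i p * a i q)]
  have hCsub : Csub d n a lam S = Bᵀ * B + lam • 1 := by
    ext i j
    simp only [Csub, Cmat, Amat, Matrix.submatrix_apply, Matrix.add_apply, Matrix.mul_apply,
      Matrix.transpose_apply, Matrix.of_apply, Matrix.smul_apply, Matrix.one_apply, hB,
      smul_eq_mul]
    congr 1
    by_cases h : i = j
    · rw [if_pos h, if_pos (by rw [h])]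
    · rw [if_neg h, if_neg (fun hh => h (Subtype.ext hh))]
  have hcard : (Fintype.card {x : Fin n // x ∈ S} : ℝ) = (S.card : ℝ) := by
    rw [Fintype.card_coe]
  rw [fS, hInfo, hCsub, trace_identity B hlam, hcard]

theorem stmt0 (d n : ℕ) (hd : 1 ≤ d) (hdn : d ≤ n)
    (a : Fin n → Fin d → ℝ) (lam : ℝ) (hlam : 0 < lam)
    (k : ℕ) (hk1 : 1 ≤ k) (hkn : k ≤ n) :
    (∀ S : Finset (Fin n), S.card = k →
      fS d n a lam S = Matrix.trace (Csub d n a lam S)⁻¹ + ((d : ℝ) - k) / lam) ∧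
    zk d n a lam k =
      sInf {r : ℝ | ∃ S : Finset (Fin n), S.card = k ∧
        Matrix.trace (Csub d n a lam S)⁻¹ = r} + ((d : ℝ) - k) / lam := by
  have part1 : ∀ S : Finset (Fin n), S.card = k →
      fS d n a lam S = Matrix.trace (Csub d n a lam S)⁻¹ + ((d : ℝ) - k) / lam := by
    intro S hS
    rw [fS_eq d n a hlam S, hS]
  refine ⟨part1, ?_⟩
  set c : ℝ := ((d : ℝ) - k) / lam with hc
  set T : Set ℝ := {r : ℝ | ∃ S : Finset (Fin n), S.card = k ∧
      Matrix.trace (Csub d n a lam S)⁻¹ = r} with hT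
  have hTfin : T.Finite := by
    have : T ⊆ Set.range (fun S : Finset (Fin n) => Matrix.trace (Csub d n a lam S)⁻¹) := by
      rintro r ⟨S, _, hr⟩; exact ⟨S, hr⟩
    exact (Set.finite_range _).subset this
  have hTne : T.Nonempty := by
    obtain ⟨S, _, hScard⟩ := Finset.exists_subset_card_eq
      (show k ≤ (Finset.univ : Finset (Fin n)).card by simpa using hkn)
    exact ⟨_, S, hScard, rfl⟩
  have hTbdd : BddBelow T := hTfin.bddBelow
  have hset : {r : ℝ | ∃ S : Finset (Fin n), S.card = k ∧ fS d n a lam S = r}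
      = (fun x => x + c) '' T := by
    ext r
    constructor
    · rintro ⟨S, hS, hr⟩
      exact ⟨Matrix.trace (Csub d n a lam S)⁻¹, ⟨S, hS, rfl⟩, by rw [← hr, part1 S hS]⟩
    · rintro ⟨x, ⟨S, hS, hx⟩, hr⟩
      exact ⟨S, hS, by rw [part1 S hS, hx]; exact hr⟩
  rw [zk, hset,
    show (fun x => x + c) '' T = ⇑(OrderIso.addRight c) '' T from by
      ext r; simp [OrderIso.addRight_apply],
    ← (OrderIso.addRight c).map_csInf' hTne hTbdd]
  rfl
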